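/- Let G be a finite simple graph, W ⊆ V(G), and let v ∈ W be a vertex of degree 1 in G. Then the minimum size of a {G, W}-dominating set equals the minimum size of a {G − v, W\{v}}-dominating set. -/

import Mathlib

open SimpleGraph

/-- `S` is a `{G, W}`-dominating set: `S` dominates all vertices outside `W`. -/
def WDomSet {V : Type*} (G : SimpleGraph V) (W S : Set V) : Prop :=
  ∀ b : V, b ∉ W → ∃ a ∈ S, a = b ∨ G.Adj a b

/-- Minimum size of a `{G, W}`-dominating set. -/
noncomputable def minWDom {V : Type*} (G : SimpleGraph V) (W : Set V) : ℕ :=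
  sInf {n | ∃ S : Set V, WDomSet G W S ∧ S.ncard = n}

/-- If `v ∈ W` has degree 1 in `G`, then the minimum size of a `{G, W}`-dominating set
    equals the minimum size of a `{G − v, W \ {v}}`-dominating set. -/
theorem stmt9 {V : Type*} [Fintype V] [DecidableEq V] (G : SimpleGraph V)
    [DecidableRel G.Adj] (W : Set V) (v : V) (hvW : v ∈ W) (hdeg : G.degree v = 1) :
    minWDom G W = minWDom (G.induce {x | x ≠ v}) {x : {x : V // x ≠ v} | ↑x ∈ W} := by
  classical
  obtain ⟨u, hu⟩ : ∃ u, (G.neighborFinset v) = {u} := Finset.card_eq_one.mp hdeg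
  have hadj : G.Adj v u := by rw [← mem_neighborFinset, hu]; simp
  have huniq : ∀ b, G.Adj v b → b = u := fun b hb => by
    have h := (mem_neighborFinset G v b).mpr hb
    rw [hu] at h; simpa using h
  have hne : u ≠ v := hadj.ne'
  apply le_antisymm
  · -- minWDom G W ≤ minWDom induced
    have hne2 : {n | ∃ S : Set {x : V // x ≠ v},
        WDomSet (G.induce {x | x ≠ v}) {x : {x : V // x ≠ v} | ↑x ∈ W} S ∧ S.ncard = n}.Nonempty :=
      ⟨_, Set.univ, fun b _ => ⟨b, trivial, Or.inl rfl⟩, rfl⟩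
    obtain ⟨T, hT, hTcard⟩ := Nat.sInf_mem hne2
    rw [minWDom, minWDom]
    refine le_trans (Nat.sInf_le ?_) hTcard.le
    refine ⟨(↑) '' T, ?_, Set.ncard_image_of_injective _ Subtype.coe_injective⟩
    intro b hb
    have hbv : b ≠ v := fun h => hb (h ▸ hvW)
    obtain ⟨a, haT, ha⟩ := hT ⟨b, hbv⟩ (by exact hb)
    refine ⟨(a : V), ⟨a, haT, rfl⟩, ?_⟩
    rcases ha with h | h
    · left; exact congrArg Subtype.val h
    · right; exact h
  · -- minWDom induced ≤ minWDom G
    have hne1 : {n | ∃ S : Set V, WDomSet G W S ∧ S.ncard = n}.Nonempty :=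
      ⟨_, Set.univ, fun b _ => ⟨b, trivial, Or.inl rfl⟩, rfl⟩
    obtain ⟨S, hS, hScard⟩ := Nat.sInf_mem hne1
    set S' : Set V := (S \ {v}) ∪ (if v ∈ S then {u} else ∅) with hS'def
    have hvS' : v ∉ S' := by
      rintro (⟨-, h⟩ | h)
      · exact h rfl
      · split_ifs at h with hv
        · exact hne (Set.mem_singleton_iff.mp h).symm
        · exact h.elim
    set T : Set {x : V // x ≠ v} := {x | (x : V) ∈ S'} with hTdef
    have hTdom : WDomSet (G.induce {x | x ≠ v}) {x : {x : V // x ≠ v} | ↑x ∈ W} T := by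
      rintro ⟨b, hbv⟩ hb
      change b ∉ W at hb
      obtain ⟨a, haS, ha⟩ := hS b hb
      by_cases hav : a = v
      · subst hav
        rcases ha with h | h
        · exact absurd h.symm hbv
        · have hbu : b = u := huniq b h
          refine ⟨⟨u, hne⟩, ?_, Or.inl (by simp [hbu])⟩
          simp only [hTdef, Set.mem_setOf_eq, hS'def, Set.mem_union]
          right; simp [haS]
      · refine ⟨⟨a, hav⟩, ?_, ?_⟩
        · simp only [hTdef, Set.mem_setOf_eq, hS'def, Set.mem_union]
          left; exact ⟨haS, hav⟩
        · rcases ha with h | h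
          · left; exact Subtype.ext h
          · right; exact h
    have hTcard : T.ncard = S'.ncard := by
      have himg : (↑) '' T = S' := by
        ext x
        simp only [Set.mem_image, hTdef, Set.mem_setOf_eq]
        constructor
        · rintro ⟨y, hy, rfl⟩; exact hy
        · intro hx
          have hxv : x ≠ v := fun h => hvS' (h ▸ hx)
          exact ⟨⟨x, hxv⟩, hx, rfl⟩
      rw [← himg, Set.ncard_image_of_injective _ Subtype.coe_injective]
    have hS'card : S'.ncard ≤ S.ncard := by
      by_cases hvS : v ∈ S
      · calc S'.ncard ≤ (S \ {v}).ncard + (if v ∈ S then ({u} : Set V) else ∅).ncard :=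
              Set.ncard_union_le _ _
          _ ≤ (S \ {v}).ncard + 1 := by
              simp only [hvS, if_true]
              simp [Set.ncard_singleton]
          _ = S.ncard := Set.ncard_diff_singleton_add_one hvS (Set.toFinite S)
      · have : S' = S := by
          simp only [hS'def, hvS, if_false, Set.union_empty]
          rw [Set.diff_singleton_eq_self hvS]
        rw [this]
    calc minWDom (G.induce {x | x ≠ v}) {x : {x : V // x ≠ v} | ↑x ∈ W}
        ≤ T.ncard := Nat.sInf_le ⟨T, hTdom, rfl⟩
      _ ≤ S.ncard := by rw [hTcard]; exact hS'card
      _ = minWDom G W := hScard
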